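/- Let X be a topological space and A ⊆ X a closed subspace. Let Y = X ∪_A X be the adjunction space obtained as the quotient of X × {0,1} by identifying (a,0) with (a,1) for every a ∈ A, equipped with the Z/2-action induced by the swap (x,i) ↦ (x,1−i), which interchanges the two copies of X. Then the effective topological complexity satisfies TC^{Z/2,∞}(Y) ≤ TC(X), where TC(X) is Farber's (non-reduced) topological complexity of X. -/

import Mathlib

open Set

/-- The space of `k`-tuples of paths in `X` that are consecutive up to the `G`-action:
the `(i+1)`-st path starts in the `G`-orbit of the endpoint of the `i`-th path. -/
def effPk (G X : Type*) [Group G] [TopologicalSpace X] [MulAction G X] (k : ℕ) :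
    Set (Fin k → C(unitInterval, X)) :=
  {γ | ∀ (i : ℕ) (h : i + 1 < k),
    γ ⟨i + 1, h⟩ 0 ∈ MulAction.orbit G (γ ⟨i, Nat.lt_of_succ_lt h⟩ 1)}

/-- A `(G,k)`-motion planner on `U ⊆ X × X`: a continuous section over `U` of the map
`π_k` sending a `k`-tuple of consecutive-up-to-`G` paths to its (start, end) pair. -/
def IsEffPlanner (G X : Type*) [Group G] [TopologicalSpace X] [MulAction G X]
    (k : ℕ) (hk : 0 < k) (U : Set (X × X)) : Prop :=
  ∃ s : U → (Fin k → C(unitInterval, X)),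
    Continuous s ∧ (∀ u, s u ∈ effPk G X k) ∧
    ∀ u : U, (s u ⟨0, hk⟩) 0 = (u : X × X).1 ∧
      (s u ⟨k - 1, Nat.sub_lt hk Nat.one_pos⟩) 1 = (u : X × X).2

/-- `TC^{G,k}(X)`: the least `ℓ ≥ 1` such that `X × X` admits an open cover by `ℓ` sets,
each admitting a `(G,k)`-motion planner; `∞` if there is no such `ℓ`. -/
noncomputable def effTC (G X : Type*) [Group G] [TopologicalSpace X] [MulAction G X]
    (k : ℕ) (hk : 0 < k) : ℕ∞ :=
  sInf {ℓ : ℕ∞ | ∃ n : ℕ, ℓ = n ∧ 1 ≤ n ∧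
    ∃ U : Fin n → Set (X × X), (∀ i, IsOpen (U i)) ∧ (⋃ i, U i) = Set.univ ∧
      ∀ i, IsEffPlanner G X k hk (U i)}

/-- Effective topological complexity `TC^{G,∞}(X)`: the minimum of `TC^{G,k}(X)` over `k ≥ 1`. -/
noncomputable def effTCinf (G X : Type*) [Group G] [TopologicalSpace X] [MulAction G X] : ℕ∞ :=
  ⨅ k : ℕ, effTC G X (k + 1) k.succ_pos

/-- Farber's (non-reduced) topological complexity `TC(X)`. -/
noncomputable def farberTC (X : Type*) [TopologicalSpace X] : ℕ∞ :=
  sInf {ℓ : ℕ∞ | ∃ n : ℕ, ℓ = n ∧ 1 ≤ n ∧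
    ∃ U : Fin n → Set (X × X), (∀ i, IsOpen (U i)) ∧ (⋃ i, U i) = Set.univ ∧
      ∀ i, ∃ s : (U i) → C(unitInterval, X), Continuous s ∧
        ∀ u : (U i), (s u) 0 = (u : X × X).1 ∧ (s u) 1 = (u : X × X).2}

/-- The action of `ℤ/2` on `X` generated by an involution `f`. -/
def involutionAction {X : Type*} (f : X → X) (hf : ∀ x, f (f x) = x) :
    MulAction (Multiplicative (ZMod 2)) X where
  smul g x := if g.toAdd = 1 then f x else x
  one_smul x := by
    show (if (Multiplicative.toAdd (1 : Multiplicative (ZMod 2))) = 1 then f x else x) = x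
    simp
  mul_smul a b x := by
    have hcases : ∀ z : ZMod 2, z = 0 ∨ z = 1 := by decide
    show (if (Multiplicative.toAdd (a * b)) = 1 then f x else x) =
      (if a.toAdd = 1 then f (if b.toAdd = 1 then f x else x) else (if b.toAdd = 1 then f x else x))
    rcases hcases a.toAdd with ha | ha <;> rcases hcases b.toAdd with hb | hb <;>
      simp [toAdd_mul, ha, hb, hf x]

/-- The identification relation of the adjunction space `X ∪_A X`: two copies of `X`
(indexed by `Bool`) glued along `A`. -/
def adjRel (X : Type*) (A : Set X) (p q : X × Bool) : Prop :=
  p = q ∨ (p.1 = q.1 ∧ p.1 ∈ A)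

/-- The adjunction space `X ∪_A X`, with the quotient topology. -/
def AdjSpace (X : Type*) [TopologicalSpace X] (A : Set X) : Type _ := Quot (adjRel X A)

instance (X : Type*) [TopologicalSpace X] (A : Set X) : TopologicalSpace (AdjSpace X A) :=
  instTopologicalSpaceQuot

/-- The involution of `X ∪_A X` interchanging the two copies of `X`. -/
def adjSwap (X : Type*) [TopologicalSpace X] (A : Set X) : AdjSpace X A → AdjSpace X A :=
  Quot.map (fun p => (p.1, !p.2)) (by
    rintro p q (rfl | ⟨h1, h2⟩)
    · exact Or.inl rfl
    · exact Or.inr ⟨h1, h2⟩)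

lemma adjSwap_invol (X : Type*) [TopologicalSpace X] (A : Set X) (y : AdjSpace X A) :
    adjSwap X A (adjSwap X A y) = y := by
  induction y using Quot.ind with
  | mk p =>
    obtain ⟨x, b⟩ := p
    show Quot.mk _ (x, !!b) = Quot.mk _ (x, b)
    rw [Bool.not_not]


/-- Retraction `X ∪_A X → X`. -/
def adjRetr (X : Type*) [TopologicalSpace X] (A : Set X) : AdjSpace X A → X :=
  Quot.lift Prod.fst (by rintro p q (rfl | ⟨h, -⟩) <;> [rfl; exact h])

lemma adjRetr_continuous (X : Type*) [TopologicalSpace X] (A : Set X) :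
    Continuous (adjRetr X A) :=
  continuous_quot_lift _ continuous_fst

/-- Inclusion of the first copy of `X` into `X ∪_A X`. -/
def adjIncl (X : Type*) [TopologicalSpace X] (A : Set X) : C(X, AdjSpace X A) :=
  ⟨fun x => Quot.mk _ (x, false),
    continuous_quot_mk.comp (continuous_id.prodMk continuous_const)⟩

lemma adj_mem_orbit {X : Type*} [TopologicalSpace X] (A : Set X) (x : X) (b : Bool) :
    (show AdjSpace X A from Quot.mk (adjRel X A) (x, b)) ∈
        @MulAction.orbit (Multiplicative (ZMod 2)) (AdjSpace X A)
          (involutionAction (adjSwap X A) (adjSwap_invol X A)).toSMul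
          (Quot.mk (adjRel X A) (x, false)) ∧
      (show AdjSpace X A from Quot.mk (adjRel X A) (x, false)) ∈
        @MulAction.orbit (Multiplicative (ZMod 2)) (AdjSpace X A)
          (involutionAction (adjSwap X A) (adjSwap_invol X A)).toSMul
          (Quot.mk (adjRel X A) (x, b)) := by
  constructor
  · refine ⟨Multiplicative.ofAdd (if b then 1 else 0), ?_⟩
    show (if Multiplicative.toAdd (Multiplicative.ofAdd (if b then (1 : ZMod 2) else 0)) = 1
        then adjSwap X A (Quot.mk (adjRel X A) (x, false))
        else Quot.mk (adjRel X A) (x, false)) = Quot.mk (adjRel X A) (x, b)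
    cases b <;> simp <;> try rfl
  · refine ⟨Multiplicative.ofAdd (if b then 1 else 0), ?_⟩
    show (if Multiplicative.toAdd (Multiplicative.ofAdd (if b then (1 : ZMod 2) else 0)) = 1
        then adjSwap X A (Quot.mk (adjRel X A) (x, b))
        else Quot.mk (adjRel X A) (x, b)) = Quot.mk (adjRel X A) (x, false)
    cases b <;> simp <;> try rfl

/-- For a closed subspace `A ⊆ X`, the adjunction space `X ∪_A X`, with the
`ℤ/2`-action interchanging the two copies of `X`, satisfies `TC^{ℤ/2,∞}(X ∪_A X) ≤ TC(X)`. -/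
theorem effTCinf_adjSpace_le_farberTC {X : Type*} [TopologicalSpace X] (A : Set X)
    (hA : IsClosed A) :
    @effTCinf (Multiplicative (ZMod 2)) (AdjSpace X A) _ _
      (involutionAction (adjSwap X A) (adjSwap_invol X A)) ≤ farberTC X := by
  classical
  set Y := AdjSpace X A
  set r := adjRetr X A
  refine le_sInf ?_
  rintro b ⟨n, rfl, hn, U, hUo, hUc, hUs⟩
  refine le_trans (iInf_le _ 2) (sInf_le ?_)
  refine ⟨n, rfl, hn, fun i => (fun p : Y × Y => (r p.1, r p.2)) ⁻¹' (U i), ?_, ?_, ?_⟩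
  · intro i
    exact (hUo i).preimage (((adjRetr_continuous X A).comp continuous_fst).prodMk
      ((adjRetr_continuous X A).comp continuous_snd))
  · ext p
    simp only [Set.mem_iUnion, Set.mem_preimage, Set.mem_univ, iff_true]
    have : (r p.1, r p.2) ∈ ⋃ i, U i := by rw [hUc]; trivial
    exact Set.mem_iUnion.mp this
  · intro i
    obtain ⟨σ, hσc, hσ⟩ := hUs i
    set V : Set (Y × Y) := (fun p : Y × Y => (r p.1, r p.2)) ⁻¹' (U i) with hV
    have hρc : Continuous (fun u : V => (⟨(r (u : Y × Y).1, r (u : Y × Y).2), u.2⟩ : U i)) := by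
      refine Continuous.subtype_mk ?_ _
      exact (((adjRetr_continuous X A).comp (continuous_fst.comp continuous_subtype_val)).prodMk
        ((adjRetr_continuous X A).comp (continuous_snd.comp continuous_subtype_val)))
    set ρ : V → U i := fun u => ⟨(r (u : Y × Y).1, r (u : Y × Y).2), u.2⟩ with hρ
    refine ⟨fun u => ![ContinuousMap.const _ (u : Y × Y).1,
      (adjIncl X A).comp (σ (ρ u)), ContinuousMap.const _ (u : Y × Y).2], ?_, ?_, ?_⟩
    · refine continuous_pi fun j => ?_
      fin_cases j
      · exact ContinuousMap.continuous_const'.comp (continuous_fst.comp continuous_subtype_val)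
      · exact (ContinuousMap.continuous_postcomp _).comp (hσc.comp hρc)
      · exact ContinuousMap.continuous_const'.comp (continuous_snd.comp continuous_subtype_val)
    · rintro u j hj
      obtain rfl | rfl : j = 0 ∨ j = 1 := by omega
      · -- γ₂ 0 ∈ orbit (γ₁ 1)
        have h0 : σ (ρ u) 0 = r (u : Y × Y).1 := (hσ (ρ u)).1
        show (show AdjSpace X A from Quot.mk (adjRel X A) (σ (ρ u) 0, false)) ∈
          @MulAction.orbit (Multiplicative (ZMod 2)) (AdjSpace X A)
            (involutionAction (adjSwap X A) (adjSwap_invol X A)).toSMul ((u : Y × Y).1)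
        rw [h0]
        obtain ⟨⟨x, c⟩, hx⟩ := Quot.exists_rep (u : Y × Y).1
        rw [← hx]
        exact (adj_mem_orbit A x c).2
      · -- γ₃ 0 ∈ orbit (γ₂ 1)
        have h1 : σ (ρ u) 1 = r (u : Y × Y).2 := (hσ (ρ u)).2
        show (u : Y × Y).2 ∈
          @MulAction.orbit (Multiplicative (ZMod 2)) (AdjSpace X A)
            (involutionAction (adjSwap X A) (adjSwap_invol X A)).toSMul
            (show AdjSpace X A from Quot.mk (adjRel X A) (σ (ρ u) 1, false))
        rw [h1]
        obtain ⟨⟨x, c⟩, hx⟩ := Quot.exists_rep (u : Y × Y).2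
        rw [← hx]
        exact (adj_mem_orbit A x c).1
    · intro u
      exact ⟨rfl, rfl⟩
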